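/- Let R be a noetherian commutative ring satisfying conditions (G₀) and (S₁), and let I be an ideal of R. Then the canonical homomorphism I** → R** = R is injective, so that the double dual I** may be identified with an ideal of R. -/

import Mathlib

section Defs2
variable (R : Type*) [CommRing R]

/-- `DepthGE A n` : the local ring `A` has depth at least `n`, i.e. there is a regular
sequence of length `n` contained in the maximal ideal. -/
def DepthGE (A : Type*) [CommRing A] [IsLocalRing A] (n : ℕ) : Prop :=
  ∃ rs : List A, rs.length = n ∧ (∀ r ∈ rs, r ∈ IsLocalRing.maximalIdeal A) ∧
    RingTheory.Sequence.IsRegular A rs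

/-- The height of a prime ideal. -/
noncomputable def primeHt (𝔯 : Ideal R) (h : 𝔯.IsPrime) : ℕ∞ :=
  Order.height (⟨𝔯, h⟩ : PrimeSpectrum R)

/-- Condition (G₀): the localization of `R` at every prime of height `0` is Gorenstein
(for a zero-dimensional local ring, Gorenstein means self-injective). -/
def CondG0 : Prop :=
  ∀ (𝔯 : Ideal R) (h : 𝔯.IsPrime), primeHt R 𝔯 h ≤ 0 →
    Module.Injective (Localization.AtPrime 𝔯) (Localization.AtPrime 𝔯)

/-- Serre's condition (Sₙ): `depth R_𝔯 ≥ min {n, ht 𝔯}` for every prime `𝔯`. -/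
def CondS (n : ℕ) : Prop :=
  ∀ (𝔯 : Ideal R) (h : 𝔯.IsPrime) (m : ℕ),
    (m : ℕ∞) ≤ min (n : ℕ∞) (primeHt R 𝔯 h) → DepthGE (Localization.AtPrime 𝔯) m

/-- The canonical map `I** → R** = R` for an ideal `I ⊆ R`. -/
noncomputable def bidualToRing (I : Ideal R) :
    Module.Dual R (Module.Dual R I) →ₗ[R] R where
  toFun φ := φ ((Submodule.subtype I).dualMap (LinearMap.id : R →ₗ[R] R))
  map_add' := by intros; rfl
  map_smul' := by intros; rfl
end Defs2

lemma extension_step {R : Type*} [CommRing R] [IsNoetherianRing R] (S : Submonoid R)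
    (hinj : Module.Injective (Localization S) (Localization S))
    (I : Ideal R) (g : Module.Dual R I) :
    ∃ u ∈ S, ∃ r : R, ∀ (a : R) (ha : a ∈ I), u * g ⟨a, ha⟩ = r * a := by
  classical
  obtain ⟨T, hT⟩ := IsNoetherian.noetherian I
  let Rp := Localization S
  let fI := LocalizedModule.mkLinearMap S ↥I
  let fR := Algebra.linearMap R Rp
  let ιp := IsLocalizedModule.map S fI fR (Submodule.subtype I)
  let gp := IsLocalizedModule.map S fI fR g
  have hιinj : Function.Injective ιp :=
    IsLocalizedModule.map_injective S fI fR (Submodule.subtype I) (Submodule.injective_subtype I)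
  obtain ⟨h, hh⟩ := hinj.out (ιp.extendScalarsOfIsLocalization S Rp) hιinj
    (gp.extendScalarsOfIsLocalization S Rp)
  have key : ∀ a : ↥I, algebraMap R Rp (g a) = algebraMap R Rp (a : R) * h 1 := by
    intro a
    have e1 : ιp (fI a) = algebraMap R Rp (a : R) :=
      IsLocalizedModule.map_apply S fI fR (Submodule.subtype I) a
    have e2 := hh (fI a)
    simp only [LinearMap.extendScalarsOfIsLocalization_apply'] at e2
    have e3 : gp (fI a) = algebraMap R Rp (g a) :=
      IsLocalizedModule.map_apply S fI fR g a
    have e4 : h (algebraMap R Rp (a : R)) = algebraMap R Rp (a : R) * h 1 := by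
      conv_lhs => rw [show algebraMap R Rp (a : R) = (algebraMap R Rp (a : R)) • (1 : Rp) by
        rw [smul_eq_mul, mul_one]]
      rw [map_smul, smul_eq_mul]
    rw [← e3, ← e2, e1, e4]
  obtain ⟨⟨r, s⟩, hc⟩ := IsLocalization.mk'_surjective S (h 1)
  replace hc : IsLocalization.mk' Rp r s = h 1 := hc
  have per : ∀ a : ↥I, ∃ c : S, (c : R) * ((s : R) * g a) = c * (r * (a : R)) := by
    intro a
    have hk := key a
    rw [← hc] at hk
    have u1 := IsLocalization.mk'_spec' Rp r s
    have e5 : algebraMap R Rp ((s : R) * g a) = algebraMap R Rp (r * (a : R)) := by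
      rw [map_mul, map_mul]
      linear_combination (algebraMap R Rp (s : R)) * hk + (algebraMap R Rp (a : R)) * u1
    exact (IsLocalization.eq_iff_exists S Rp).mp e5
  have claim : ∀ U : Finset R, ∃ t : S, ∀ (a : ↥I), (a : R) ∈ U →
      (t : R) * ((s : R) * g a) = t * (r * (a : R)) := by
    intro U
    induction U using Finset.induction_on with
    | empty => exact ⟨1, fun a ha => absurd ha (Finset.notMem_empty _)⟩
    | @insert x U hxU ih =>
      obtain ⟨t, ht⟩ := ih
      by_cases hxI : x ∈ I
      · obtain ⟨c, hc'⟩ := per ⟨x, hxI⟩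
        refine ⟨t * c, fun a ha => ?_⟩
        rcases Finset.mem_insert.mp ha with h' | h'
        · have ha' : a = ⟨x, hxI⟩ := Subtype.ext h'
          subst ha'
          push_cast
          linear_combination (t : R) * hc'
        · push_cast
          linear_combination (c : R) * ht a h'
      · refine ⟨t, fun a ha => ?_⟩
        rcases Finset.mem_insert.mp ha with h' | h'
        · exact absurd (h' ▸ a.2) hxI
        · exact ht a h'
  obtain ⟨t, ht⟩ := claim T
  refine ⟨(t : R) * (s : R), S.mul_mem t.2 s.2, (t : R) * r, ?_⟩
  intro a ha
  have hsp : a ∈ Submodule.span R (T : Set R) := hT.symm ▸ ha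
  revert ha
  induction hsp using Submodule.span_induction with
  | mem y hyT =>
    intro hyI
    linear_combination ht ⟨y, hyI⟩ hyT
  | zero =>
    intro h0
    simp only [show (⟨0, h0⟩ : ↥I) = 0 from rfl, map_zero, mul_zero]
  | add y z' hy hz' ihy ihz' =>
    intro hyz
    have hyI : y ∈ I := hT ▸ hy
    have hzI : z' ∈ I := hT ▸ hz'
    have hadd : (⟨y + z', hyz⟩ : ↥I) = ⟨y, hyI⟩ + ⟨z', hzI⟩ := rfl
    rw [hadd, map_add]
    linear_combination ihy hyI + ihz' hzI
  | smul c y hy ih =>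
    intro hcy
    have hyI : y ∈ I := hT ▸ hy
    have hsmul : (⟨c • y, hcy⟩ : ↥I) = c • ⟨y, hyI⟩ := rfl
    rw [hsmul, map_smul, smul_eq_mul, smul_eq_mul]
    linear_combination c * ih hyI

/-- If a noetherian ring satisfies (G₀) and (S₁), then for any ideal `I` the canonical map
`I** → R** = R` is injective. -/
theorem bidualToRing_injective (R : Type*) [CommRing R] [IsNoetherianRing R]
    (hG : CondG0 R) (hS : CondS R 1) (I : Ideal R) :
    Function.Injective (bidualToRing R I) := by
  rw [← LinearMap.ker_eq_bot, LinearMap.ker_eq_bot']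
  intro φ hφ0
  by_contra hφ
  have hex : ∃ g : Module.Dual R I, φ g ≠ 0 := by
    by_contra hc
    push_neg at hc
    exact hφ (LinearMap.ext fun g => by simp [hc])
  obtain ⟨g, hg⟩ := hex
  obtain ⟨P, hPass, hannle⟩ :=
    exists_le_isAssociatedPrime_of_isNoetherianRing R (φ g) hg
  obtain ⟨hPprime, z, hzP⟩ := isAssociatedPrime_iff.mp hPass
  haveI := hPprime
  have hmemP : ∀ c : R, c ∈ P ↔ c * z = 0 := fun c => by
    rw [hzP, Submodule.mem_colon_singleton, Submodule.mem_bot, smul_eq_mul]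
  have hz0 : z ≠ 0 := by
    rintro rfl
    replace hzP : P = ⊤ := by
      rw [Ideal.eq_top_iff_one, hzP, Submodule.mem_colon_singleton, smul_zero]
      exact Submodule.zero_mem _
    exact hPprime.ne_top hzP
  have hht : primeHt R P hPprime ≤ 0 := by
    by_contra hpos
    have h1 : ((1 : ℕ) : ℕ∞) ≤ min ((1 : ℕ) : ℕ∞) (primeHt R P hPprime) := by
      refine le_min (by norm_num) ?_
      rw [Nat.cast_one]
      exact ENat.one_le_iff_ne_zero.mpr (fun h => hpos (le_of_eq h))
    obtain ⟨rs, hlen, hmem, hreg⟩ := hS P hPprime 1 h1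
    obtain ⟨r0, rfl⟩ := List.length_eq_one_iff.mp hlen
    have hz1 : algebraMap R (Localization.AtPrime P) z ≠ 0 := by
      intro h0
      obtain ⟨m, hm⟩ := (IsLocalization.map_eq_zero_iff P.primeCompl _ z).mp h0
      exact m.2 ((hmemP m).mpr hm)
    have hr0z : r0 * algebraMap R (Localization.AtPrime P) z = 0 := by
      have hr0 : r0 ∈ IsLocalRing.maximalIdeal (Localization.AtPrime P) :=
        hmem r0 (List.mem_singleton.mpr rfl)
      rw [← Localization.AtPrime.map_eq_maximalIdeal] at hr0
      have hle : Ideal.map (algebraMap R (Localization.AtPrime P)) P ≤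
          (Submodule.span (Localization.AtPrime P)
            {algebraMap R (Localization.AtPrime P) z}).annihilator := by
        rw [Ideal.map_le_iff_le_comap]
        intro c hc
        rw [Ideal.mem_comap, Submodule.mem_annihilator_span_singleton, smul_eq_mul,
          ← map_mul, (hmemP c).mp hc, map_zero]
      have := hle hr0
      rwa [Submodule.mem_annihilator_span_singleton, smul_eq_mul] at this
    have hwr : IsSMulRegular (Localization.AtPrime P) r0 :=
      (RingTheory.Sequence.isWeaklyRegular_singleton_iff _ _).mp hreg.toIsWeaklyRegular
    exact hz1 (hwr (show r0 • algebraMap R (Localization.AtPrime P) z = r0 • (0 : _) by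
      rw [smul_eq_mul, hr0z, smul_zero]))
  have hGor := hG P hPprime hht
  obtain ⟨u, huS, r, hur⟩ := extension_step P.primeCompl hGor I g
  have hkey : u • g = r • ((Submodule.subtype I).dualMap (LinearMap.id : R →ₗ[R] R)) := by
    ext a
    simp only [LinearMap.smul_apply, smul_eq_mul, LinearMap.dualMap_apply, LinearMap.id_apply,
      Submodule.coe_subtype]
    exact hur (a : R) a.2
  have hφkey := congrArg φ hkey
  rw [map_smul, map_smul] at hφkey
  have hφι : φ ((Submodule.subtype I).dualMap (LinearMap.id : R →ₗ[R] R)) = 0 := hφ0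
  rw [hφι, smul_zero, smul_eq_mul] at hφkey
  exact huS (hannle (by
    rw [Submodule.mem_colon_singleton, Submodule.mem_bot, smul_eq_mul]
    exact hφkey))
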